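/- Let Γ be a finite bipartite graph whose nontrivial connected components (those containing at least one edge) are C_1,…,C_ℓ, and suppose the sum over j of (|V(C_j)| - 1) is at most 2m for some m ≥ 2. Then the total number of edges of Γ is at most m(m+1), with the maximum m(m+1) attained only when ℓ = 1 and C_1 is isomorphic to the complete bipartite graph K_{m,m+1}. -/

import Mathlib

private lemma aux_four_mul (a b : ℕ) : 4 * (a * b) ≤ (a + b)^2 := by
  rcases le_total a b with h | h
  · obtain ⟨k, rfl⟩ := Nat.exists_eq_add_of_le h
    nlinarith [Nat.zero_le (k^2)]
  · obtain ⟨k, rfl⟩ := Nat.exists_eq_add_of_le h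
    nlinarith [Nat.zero_le (k^2)]

private lemma aux_prod_le {a b m : ℕ} (h : a + b ≤ 2*m + 1) : a * b ≤ m * (m+1) := by
  have h1 := aux_four_mul a b
  have h2 : (a+b)^2 ≤ (2*m+1)^2 := Nat.pow_le_pow_left h 2
  have h3 : (2*m+1)^2 = 4*(m*(m+1)) + 1 := by ring
  omega

private lemma aux_prod_eq {a b m : ℕ} (h : a + b ≤ 2*m + 1) (he : a * b = m * (m+1))
    (hm : 1 ≤ m) : (a = m ∧ b = m + 1) ∨ (a = m + 1 ∧ b = m) := by
  have hab : a + b = 2*m + 1 := by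
    rcases Nat.lt_or_ge (a+b) (2*m+1) with h' | h'
    · exfalso
      have h1 := aux_four_mul a b
      have h2 : (a+b)^2 ≤ (2*m)^2 := Nat.pow_le_pow_left (by omega) 2
      have h3 : (2*m)^2 = 4*(m*m) := by ring
      have h4 : m*(m+1) = m*m + m := by ring
      omega
    · omega
  have h1 : (a:ℤ) * b = (m:ℤ) * (m+1) := by exact_mod_cast he
  have h2 : (a:ℤ) + b = 2*m + 1 := by exact_mod_cast hab
  have hz : ((a:ℤ) - m) * ((a:ℤ) - (m+1)) = 0 := by linear_combination -h1 + (a:ℤ) * h2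
  rcases mul_eq_zero.mp hz with hz | hz
  · left
    have : (a:ℤ) = m := by linarith
    have ha : a = m := by exact_mod_cast this
    omega
  · right
    have : (a:ℤ) = m + 1 := by linarith
    have ha : a = m + 1 := by exact_mod_cast this
    omega

private lemma aux_sumQ {ι : Type*} [DecidableEq ι] (a b : ι → ℕ) (s : Finset ι)
    (h : ∀ i ∈ s, 1 ≤ a i ∧ 1 ≤ b i) :
    ∑ i ∈ s, a i * b i ≤ ((∑ i ∈ s, (a i + b i - 1)) + 1)^2 / 4 := by
  induction s using Finset.induction_on with
  | empty => simp
  | @insert i s hi IH =>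
    have hai := h i (Finset.mem_insert_self i s)
    have hrest : ∀ j ∈ s, 1 ≤ a j ∧ 1 ≤ b j := fun j hj => h j (Finset.mem_insert_of_mem hj)
    have IH' := IH hrest
    rw [Finset.sum_insert hi, Finset.sum_insert hi]
    set S := ∑ j ∈ s, (a j + b j - 1) with hS
    have h1 := aux_four_mul (a i) (b i)
    rcases s.eq_empty_or_nonempty with rfl | hne
    · have hS0 : S = 0 := by simp [hS]
      have he : a i + b i - 1 + S + 1 = a i + b i := by omega
      rw [he]
      simp only [Finset.sum_empty]
      omega
    · have hS1 : 1 ≤ S := by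
        obtain ⟨j, hj⟩ := hne
        calc 1 ≤ a j + b j - 1 := by have := hrest j hj; omega
        _ ≤ S := Finset.single_le_sum (f := fun j => a j + b j - 1) (fun k _ => Nat.zero_le _) hj
      have key : (a i + b i)^2 + (S+1)^2 ≤ ((a i + b i - 1) + S + 1)^2 := by
        obtain ⟨x, hx⟩ : ∃ x, a i + b i = 2 + x := ⟨a i + b i - 2, by omega⟩
        obtain ⟨y, hy⟩ : ∃ y, S = 1 + y := ⟨S - 1, by omega⟩
        rw [hx, hy]
        have : 2 + x - 1 + (1 + y) + 1 = 3 + x + y := by omega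
        rw [this]
        nlinarith [Nat.zero_le (x*y)]
      omega


private lemma aux_iso {α : Type*} [Fintype α] (G : SimpleGraph α) (q : α → Prop)
    [DecidablePred q] (m : ℕ)
    (hadj : ∀ u v : α, G.Adj u v ↔ ¬(q u ↔ q v))
    (h1 : Fintype.card {x // q x} = m) (h2 : Fintype.card {x // ¬ q x} = m + 1) :
    Nonempty (G ≃g completeBipartiteGraph (Fin m) (Fin (m+1))) := by
  let e1 : {x // q x} ≃ Fin m := Fintype.equivFinOfCardEq h1
  let e2 : {x // ¬ q x} ≃ Fin (m+1) := Fintype.equivFinOfCardEq h2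
  let φ : α ≃ Fin m ⊕ Fin (m+1) := (Equiv.sumCompl q).symm.trans (Equiv.sumCongr e1 e2)
  refine ⟨⟨φ, ?_⟩⟩
  intro a b
  by_cases ha : q a <;> by_cases hb : q b <;>
    simp [φ, Equiv.sumCompl, ha, hb, hadj]

open scoped Classical in
theorem stmt_2 {V : Type*} [Fintype V] (Γ : SimpleGraph V)
    (hbip : ∃ c : V → Bool, ∀ ⦃u v : V⦄, Γ.Adj u v → c u ≠ c v)
    (m : ℕ) (hm : 2 ≤ m)
    (hsum : (∑ C ∈ Finset.univ.filter
        (fun C : Γ.ConnectedComponent => ∃ u v, Γ.Adj u v ∧ Γ.connectedComponentMk u = C),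
        ((Finset.univ.filter (fun v : V => Γ.connectedComponentMk v = C)).card - 1)) ≤ 2 * m) :
    Γ.edgeFinset.card ≤ m * (m + 1) ∧
    (Γ.edgeFinset.card = m * (m + 1) →
      (∃! C : Γ.ConnectedComponent, ∃ u v, Γ.Adj u v ∧ Γ.connectedComponentMk u = C) ∧
      ∀ C : Γ.ConnectedComponent, (∃ u v, Γ.Adj u v ∧ Γ.connectedComponentMk u = C) →
        Nonempty ((Γ.induce {v : V | Γ.connectedComponentMk v = C}) ≃g
          completeBipartiteGraph (Fin m) (Fin (m + 1)))) := by
  classical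
  obtain ⟨c, hc⟩ := hbip
  set N : Finset Γ.ConnectedComponent := Finset.univ.filter
      (fun C : Γ.ConnectedComponent => ∃ u v, Γ.Adj u v ∧ Γ.connectedComponentMk u = C)
      with hNdef
  set A : Γ.ConnectedComponent → Finset V :=
      fun C => Finset.univ.filter (fun v => Γ.connectedComponentMk v = C ∧ c v = false)
      with hAdef
  set B : Γ.ConnectedComponent → Finset V :=
      fun C => Finset.univ.filter (fun v => Γ.connectedComponentMk v = C ∧ c v = true)
      with hBdef
  -- the support cardinality splits
  have hsupp : ∀ C : Γ.ConnectedComponent,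
      (Finset.univ.filter (fun v : V => Γ.connectedComponentMk v = C)).card
        = (A C).card + (B C).card := by
    intro C
    have h1 : A C
        = (Finset.univ.filter (fun v : V => Γ.connectedComponentMk v = C)).filter
            (fun v => c v = false) := by
      rw [Finset.filter_filter]
    have h2 : B C
        = (Finset.univ.filter (fun v : V => Γ.connectedComponentMk v = C)).filter
            (fun v => ¬ (c v = false)) := by
      rw [Finset.filter_filter]
      apply Finset.filter_congr
      intro v _
      simp
    rw [h1, h2, Finset.card_filter_add_card_filter_not]
  -- each nontrivial component has a vertex of each color
  have hAB1 : ∀ C ∈ N, 1 ≤ (A C).card ∧ 1 ≤ (B C).card := by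
    intro C hC
    rw [hNdef, Finset.mem_filter] at hC
    obtain ⟨-, u, v, huv, hu⟩ := hC
    have hv : Γ.connectedComponentMk v = C := by
      rw [← SimpleGraph.ConnectedComponent.connectedComponentMk_eq_of_adj huv]; exact hu
    have hne := hc huv
    have hmemA : ∀ w, Γ.connectedComponentMk w = C → c w = false → w ∈ A C := by
      intro w h1 h2
      rw [hAdef]; simp only [Finset.mem_filter, Finset.mem_univ, true_and]; exact ⟨h1, h2⟩
    have hmemB : ∀ w, Γ.connectedComponentMk w = C → c w = true → w ∈ B C := by
      intro w h1 h2
      rw [hBdef]; simp only [Finset.mem_filter, Finset.mem_univ, true_and]; exact ⟨h1, h2⟩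
    cases hcu : c u with
    | false =>
      have hcv : c v = true := by
        cases hcv : c v
        · exact absurd (hcu.trans hcv.symm) hne
        · rfl
      exact ⟨Finset.card_pos.mpr ⟨u, hmemA u hu hcu⟩,
        Finset.card_pos.mpr ⟨v, hmemB v hv hcv⟩⟩
    | true =>
      have hcv : c v = false := by
        cases hcv : c v
        · rfl
        · exact absurd (hcu.trans hcv.symm) hne
      exact ⟨Finset.card_pos.mpr ⟨v, hmemA v hv hcv⟩,
        Finset.card_pos.mpr ⟨u, hmemB u hu hcu⟩⟩
  -- the oriented-edge finset
  set D : Finset (V × V) := Finset.univ.filter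
      (fun p : V × V => Γ.Adj p.1 p.2 ∧ c p.1 = false) with hDdef
  set T : Finset (V × V) := Finset.univ.filter
      (fun p : V × V => Γ.connectedComponentMk p.1 ∈ N
        ∧ Γ.connectedComponentMk p.1 = Γ.connectedComponentMk p.2
        ∧ c p.1 = false ∧ c p.2 = true) with hTdef
  have hED : Γ.edgeFinset.card = D.card := by
    refine (Finset.card_bij (fun (p : V × V) (_ : p ∈ D) => s(p.1, p.2)) ?_ ?_ ?_).symm
    · intro p hp
      rw [hDdef, Finset.mem_filter] at hp
      simp only [SimpleGraph.mem_edgeFinset, SimpleGraph.mem_edgeSet]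
      exact hp.2.1
    · intro p hp q hq h
      rw [hDdef, Finset.mem_filter] at hp hq
      rw [Sym2.eq_iff] at h
      rcases h with ⟨h1, h2⟩ | ⟨h1, h2⟩
      · exact Prod.ext h1 h2
      · exfalso
        have := hc hq.2.1
        have hq2 : c q.2 = false := h1 ▸ hp.2.2
        rw [hq.2.2, hq2] at this
        exact this rfl
    · intro e he
      induction e with
      | h u v =>
        rw [SimpleGraph.mem_edgeFinset, SimpleGraph.mem_edgeSet] at he
        cases hcu : c u with
        | false =>
          refine ⟨(u, v), ?_, rfl⟩
          rw [hDdef, Finset.mem_filter]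
          exact ⟨Finset.mem_univ _, he, hcu⟩
        | true =>
          have hcv : c v = false := by
            have := hc he
            cases hcvv : c v
            · rfl
            · rw [hcu, hcvv] at this; exact absurd rfl this
          refine ⟨(v, u), ?_, Sym2.eq_swap⟩
          rw [hDdef, Finset.mem_filter]
          exact ⟨Finset.mem_univ _, he.symm, hcv⟩
  have hDT : D ⊆ T := by
    intro p hp
    rw [hDdef, Finset.mem_filter] at hp
    obtain ⟨-, hadj, hc1⟩ := hp
    have hcc := SimpleGraph.ConnectedComponent.connectedComponentMk_eq_of_adj hadj
    have hc2 : c p.2 = true := by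
      have := hc hadj
      cases hcv : c p.2
      · rw [hc1, hcv] at this; exact absurd rfl this
      · rfl
    rw [hTdef, Finset.mem_filter]
    refine ⟨Finset.mem_univ _, ?_, hcc, hc1, hc2⟩
    rw [hNdef, Finset.mem_filter]
    exact ⟨Finset.mem_univ _, p.1, p.2, hadj, rfl⟩
  have hT : T.card = ∑ C ∈ N, (A C).card * (B C).card := by
    rw [Finset.card_eq_sum_card_fiberwise
      (f := fun p : V × V => Γ.connectedComponentMk p.1) (t := N)
      (fun p hp => by rw [hTdef, Finset.mem_coe, Finset.mem_filter] at hp; exact hp.2.1)]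
    refine Finset.sum_congr rfl fun C hC => ?_
    have hfib : T.filter (fun p : V × V => Γ.connectedComponentMk p.1 = C)
        = A C ×ˢ B C := by
      ext p
      rw [Finset.mem_filter, hTdef, Finset.mem_product, hAdef, hBdef]
      simp only [Finset.mem_filter, Finset.mem_univ, true_and]
      constructor
      · rintro ⟨⟨hN', heq, h1, h2⟩, hcC⟩
        exact ⟨⟨hcC, h1⟩, ⟨heq ▸ hcC, h2⟩⟩
      · rintro ⟨⟨h1, h2⟩, ⟨h3, h4⟩⟩
        exact ⟨⟨h1 ▸ hC, h1.trans h3.symm, h2, h4⟩, h1⟩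
    rw [hfib, Finset.card_product]
  -- rewrite hsum
  have hsum' : ∑ C ∈ N, ((A C).card + (B C).card - 1) ≤ 2 * m := by
    calc ∑ C ∈ N, ((A C).card + (B C).card - 1)
        = ∑ C ∈ N, ((Finset.univ.filter
            (fun v : V => Γ.connectedComponentMk v = C)).card - 1) :=
          Finset.sum_congr rfl fun C _ => by rw [hsupp C]
      _ ≤ 2 * m := hsum
  have hbound : ∑ C ∈ N, (A C).card * (B C).card ≤ m * (m + 1) := by
    have h1 := aux_sumQ (fun C => (A C).card) (fun C => (B C).card) N hAB1
    have h2 : (∑ C ∈ N, ((A C).card + (B C).card - 1)) + 1 ≤ 2 * m + 1 := by omega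
    calc ∑ C ∈ N, (A C).card * (B C).card
        ≤ ((∑ C ∈ N, ((A C).card + (B C).card - 1)) + 1)^2 / 4 := h1
      _ ≤ (2 * m + 1)^2 / 4 := Nat.div_le_div_right (Nat.pow_le_pow_left h2 2)
      _ = m * (m + 1) := by
          have h3 : (2 * m + 1)^2 = 4 * (m * (m + 1)) + 1 := by ring
          omega
  have hcard_le : Γ.edgeFinset.card ≤ ∑ C ∈ N, (A C).card * (B C).card := by
    rw [hED]
    exact le_trans (Finset.card_le_card hDT) hT.le
  refine ⟨le_trans hcard_le hbound, ?_⟩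
  intro heq
  have hsix : 6 ≤ m * (m + 1) := by nlinarith
  have hNcard : N.card = 1 := by
    by_contra hx
    rcases Nat.lt_or_ge N.card 1 with h | h
    · have hN0 : N = ∅ := Finset.card_eq_zero.mp (by omega)
      rw [hN0, Finset.sum_empty] at hcard_le
      omega
    · have h2 : 2 ≤ N.card := by omega
      obtain ⟨C₀, hC₀⟩ := Finset.card_pos.mp (by omega : 0 < N.card)
      have hrest : (N.erase C₀).Nonempty := by
        rw [← Finset.card_pos, Finset.card_erase_of_mem hC₀]; omega
      have hsplit : ∑ C ∈ N, (A C).card * (B C).card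
          = (A C₀).card * (B C₀).card + ∑ C ∈ N.erase C₀, (A C).card * (B C).card :=
        (Finset.add_sum_erase _ _ hC₀).symm
      have ssplit : ∑ C ∈ N, ((A C).card + (B C).card - 1)
          = ((A C₀).card + (B C₀).card - 1)
            + ∑ C ∈ N.erase C₀, ((A C).card + (B C).card - 1) :=
        (Finset.add_sum_erase _ _ hC₀).symm
      obtain ⟨ha₀, hb₀⟩ := hAB1 C₀ hC₀
      have hT'1 : 1 ≤ ∑ C ∈ N.erase C₀, ((A C).card + (B C).card - 1) := by
        obtain ⟨C₁, hC₁⟩ := hrest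
        have h1 := hAB1 C₁ (Finset.mem_of_mem_erase hC₁)
        calc 1 ≤ (A C₁).card + (B C₁).card - 1 := by omega
          _ ≤ _ := Finset.single_le_sum (f := fun C => (A C).card + (B C).card - 1)
              (fun k _ => Nat.zero_le _) hC₁
      have hb2 : ∑ C ∈ N.erase C₀, (A C).card * (B C).card
          ≤ ((∑ C ∈ N.erase C₀, ((A C).card + (B C).card - 1)) + 1)^2 / 4 :=
        aux_sumQ _ _ _ (fun C hC => hAB1 C (Finset.mem_of_mem_erase hC))
      have e1 : ((A C₀).card + (B C₀).card)^2
            + ((∑ C ∈ N.erase C₀, ((A C).card + (B C).card - 1)) + 1)^2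
          ≤ ((A C₀).card + (B C₀).card - 1
            + ∑ C ∈ N.erase C₀, ((A C).card + (B C).card - 1))^2 + 4 := by
        obtain ⟨x, hx⟩ : ∃ x, (A C₀).card + (B C₀).card = 2 + x :=
          ⟨(A C₀).card + (B C₀).card - 2, by omega⟩
        obtain ⟨y, hy⟩ : ∃ y, ∑ C ∈ N.erase C₀, ((A C).card + (B C).card - 1) = 1 + y :=
          ⟨(∑ C ∈ N.erase C₀, ((A C).card + (B C).card - 1)) - 1, by omega⟩
        rw [hx, hy]
        have hz : 2 + x - 1 + (1 + y) = 2 + x + y := by omega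
        rw [hz]
        nlinarith [Nat.zero_le (x*y)]
      have hbsum : (A C₀).card + (B C₀).card - 1
          + ∑ C ∈ N.erase C₀, ((A C).card + (B C).card - 1) ≤ 2*m := by omega
      have e2 : ((A C₀).card + (B C₀).card - 1
          + ∑ C ∈ N.erase C₀, ((A C).card + (B C).card - 1))^2 ≤ (2*m)^2 :=
        Nat.pow_le_pow_left hbsum 2
      have h4 := aux_four_mul (A C₀).card (B C₀).card
      have hq : (2*m)^2 = 4*(m*m) := by ring
      have hq2 : m*(m+1) = m*m + m := by ring
      omega
  obtain ⟨C₀, hN1⟩ := Finset.card_eq_one.mp hNcard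
  have hC₀N : C₀ ∈ N := by rw [hN1]; exact Finset.mem_singleton_self C₀
  have hPmem : ∀ C : Γ.ConnectedComponent,
      (∃ u v, Γ.Adj u v ∧ Γ.connectedComponentMk u = C) ↔ C ∈ N := by
    intro C; rw [hNdef, Finset.mem_filter]
    exact ⟨fun h => ⟨Finset.mem_univ _, h⟩, fun h => h.2⟩
  have huniq : ∀ C, C ∈ N → C = C₀ := by
    intro C hC; rw [hN1] at hC; exact Finset.mem_singleton.mp hC
  have hsum_single : ∑ C ∈ N, (A C).card * (B C).card = (A C₀).card * (B C₀).card := by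
    rw [hN1, Finset.sum_singleton]
  have heq2 : (A C₀).card * (B C₀).card = m * (m+1) := by omega
  obtain ⟨ha₀, hb₀⟩ := hAB1 C₀ hC₀N
  have hab : (A C₀).card + (B C₀).card ≤ 2*m + 1 := by
    have h1 : ∑ C ∈ N, ((A C).card + (B C).card - 1)
        = (A C₀).card + (B C₀).card - 1 := by
      rw [hN1, Finset.sum_singleton]
    omega
  have hcases := aux_prod_eq hab heq2 (by omega)
  have hTcard : T.card ≤ D.card := by
    rw [← hED, heq, hT, hsum_single, heq2]
  have hDeqT : D = T := Finset.eq_of_subset_of_card_le hDT hTcard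
  have hcomplete : ∀ u v : V, Γ.connectedComponentMk u = C₀ →
      Γ.connectedComponentMk v = C₀ → c u = false → c v = true → Γ.Adj u v := by
    intro u v hu hv hcu hcv
    have hmem : (u, v) ∈ T := by
      rw [hTdef, Finset.mem_filter]
      exact ⟨Finset.mem_univ _, by rw [hu]; exact hC₀N, by rw [hu, hv], hcu, hcv⟩
    rw [← hDeqT, hDdef, Finset.mem_filter] at hmem
    exact hmem.2.1
  have hiff : ∀ u v : V, Γ.connectedComponentMk u = C₀ → Γ.connectedComponentMk v = C₀ →
      (Γ.Adj u v ↔ c u ≠ c v) := by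
    intro u v hu hv
    constructor
    · exact fun h => hc h
    · intro hne
      cases hcu : c u with
      | false =>
        have hcv : c v = true := by
          cases hcvv : c v
          · rw [hcu, hcvv] at hne; exact absurd rfl hne
          · rfl
        exact hcomplete u v hu hv hcu hcv
      | true =>
        have hcv : c v = false := by
          cases hcvv : c v
          · rfl
          · rw [hcu, hcvv] at hne; exact absurd rfl hne
        exact (hcomplete v u hv hu hcv hcu).symm
  refine ⟨⟨C₀, (hPmem C₀).mpr hC₀N, fun C hC => huniq C ((hPmem C).mp hC)⟩, ?_⟩
  intro C hC
  have hCC : C = C₀ := huniq C ((hPmem C).mp hC)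
  subst hCC
  have eqA : {x : ↥{v : V | Γ.connectedComponentMk v = C} // c x.val = false}
      ≃ {v : V // Γ.connectedComponentMk v = C ∧ c v = false} :=
    (Equiv.subtypeSubtypeEquivSubtypeInter
        (fun v : V => v ∈ {v : V | Γ.connectedComponentMk v = C})
        (fun v => c v = false)).trans
      (Equiv.subtypeEquivRight fun x => Iff.rfl)
  have eqB : {x : ↥{v : V | Γ.connectedComponentMk v = C} // c x.val = true}
      ≃ {v : V // Γ.connectedComponentMk v = C ∧ c v = true} :=
    (Equiv.subtypeSubtypeEquivSubtypeInter
        (fun v : V => v ∈ {v : V | Γ.connectedComponentMk v = C})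
        (fun v => c v = true)).trans
      (Equiv.subtypeEquivRight fun x => Iff.rfl)
  have hcardA : Fintype.card
      {x : ↥{v : V | Γ.connectedComponentMk v = C} // c x.val = false} = (A C).card := by
    rw [Fintype.card_congr eqA, Fintype.card_subtype, hAdef]
  have hcardB : Fintype.card
      {x : ↥{v : V | Γ.connectedComponentMk v = C} // c x.val = true} = (B C).card := by
    rw [Fintype.card_congr eqB, Fintype.card_subtype, hBdef]
  have eqNegFalse : {x : ↥{v : V | Γ.connectedComponentMk v = C} // ¬ c x.val = false}
      ≃ {x : ↥{v : V | Γ.connectedComponentMk v = C} // c x.val = true} :=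
    Equiv.subtypeEquivRight fun x => by simp
  have eqNegTrue : {x : ↥{v : V | Γ.connectedComponentMk v = C} // ¬ c x.val = true}
      ≃ {x : ↥{v : V | Γ.connectedComponentMk v = C} // c x.val = false} :=
    Equiv.subtypeEquivRight fun x => by simp
  have hadjS : ∀ q : Bool, ∀ u v : ↥{v : V | Γ.connectedComponentMk v = C},
      (Γ.induce {v : V | Γ.connectedComponentMk v = C}).Adj u v
        ↔ ¬((c u.val = q) ↔ (c v.val = q)) := by
    intro q u v
    have h := hiff u.val v.val u.prop v.prop
    have h0 : (Γ.induce {v : V | Γ.connectedComponentMk v = C}).Adj u v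
        ↔ Γ.Adj u.val v.val := by
      simp
    rw [h0, h]
    cases q <;> cases hx : c u.val <;> cases hy : c v.val <;> simp [hx, hy]
  rcases hcases with ⟨haa, hbb⟩ | ⟨haa, hbb⟩
  · exact aux_iso _ (fun x => c x.val = false) m (hadjS false)
      (by rw [hcardA, haa])
      (by rw [Fintype.card_congr eqNegFalse, hcardB, hbb])
  · exact aux_iso _ (fun x => c x.val = true) m (hadjS true)
      (by rw [hcardB, hbb])
      (by rw [Fintype.card_congr eqNegTrue, hcardA, haa])
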